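/- arXiv:1706.00145 — 2 statements merged into one kernel-verified Lean document; each statement's English description precedes it below -/
import Mathlib

section
/- With η as in the previous setting (the revlex-least partition of |μ| of length m − ℓ(μ) + 1 that is ≥_revlex μ), let ν be the greatest partition (in reverse lexicographic order) of |μ| with ℓ(ν) = ℓ(μ) and ν ≤_revlex η, and let i* be the least index with η_{i*} < μ_{i*}. Then μ = ν if and only if μ_{i*} − μ_{ℓ(μ)} ≤ 1. -/
/-- `RevlexLt p q`: `p <_revlex q`, i.e. at the first index where the part sequences
differ, `p` has the larger part. -/
def RevlexLt (p q : ℕ → ℕ) : Prop := ∃ i, q i < p i ∧ ∀ j < i, p j = q j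

lemma revlex_aux_exists_rho (m L : ℕ) (μ η : ℕ → ℕ)
    (hL2 : 2 ≤ L) (hLm : 2 * L ≤ m)
    (hμa : Antitone μ) (hμlen : ∀ i, μ i ≠ 0 ↔ i < L)
    (hηa : Antitone η) (hηlen : ∀ i, η i ≠ 0 ↔ i < m - L + 1)
    (hηsum : ∑ i ∈ Finset.range m, η i = ∑ i ∈ Finset.range m, μ i)
    (istar : ℕ) (hiL : istar < L)
    (hprefix : ∀ j < istar, μ j = η j)
    (histar : η istar < μ istar)
    (hgap : μ (L - 1) + 2 ≤ μ istar) :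
    ∃ ρ : ℕ → ℕ, Antitone ρ ∧ (∀ i, ρ i ≠ 0 ↔ i < L) ∧
      (∑ i ∈ Finset.range m, ρ i = ∑ i ∈ Finset.range m, μ i) ∧
      RevlexLt ρ η ∧ ρ ≠ μ ∧ ¬ RevlexLt ρ μ := by
  obtain ⟨L', rfl⟩ : ∃ L', L = L' + 1 := ⟨L - 1, by omega⟩
  simp only [Nat.add_sub_cancel] at hgap
  obtain ⟨c, hcdef⟩ : ∃ c, c = μ istar - 1 := ⟨_, rfl⟩
  have hμL1 : 1 ≤ μ L' := by
    have := (hμlen L').2 (by omega); omega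
  have hc2 : 2 ≤ c := by omega
  have hcμ : μ istar = c + 1 := by omega
  -- a : the largest index ≤ L' with μ a = μ istar
  obtain ⟨a, hadef⟩ : ∃ a, a = Nat.findGreatest (fun j => μ istar ≤ μ j) L' := ⟨_, rfl⟩
  have haL : a ≤ L' := by rw [hadef]; exact Nat.findGreatest_le L'
  have hia : istar ≤ a := by
    rw [hadef]
    exact Nat.le_findGreatest (P := fun j => μ istar ≤ μ j) (by omega) le_rfl
  have hμa' : μ a = μ istar := by
    refine le_antisymm (hμa hia) ?_
    conv_rhs => rw [hadef]
    exact Nat.findGreatest_spec (P := fun j => μ istar ≤ μ j) (show istar ≤ L' by omega) le_rfl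
  have haL' : a < L' := by
    rcases lt_or_eq_of_le haL with h | h
    · exact h
    · exfalso; rw [h] at hμa'; omega
  have ha1 : μ (a + 1) ≤ c := by
    have h1 : ¬ (μ istar ≤ μ (a + 1)) := by
      rw [hadef]
      exact Nat.findGreatest_is_greatest (P := fun j => μ istar ≤ μ j) (n := L')
        (Nat.lt_succ_self _) (by omega)
    omega
  obtain ⟨t, htdef⟩ : ∃ t, t = L' - a := ⟨_, rfl⟩
  have ht1 : 1 ≤ t := by omega
  have htL : a + t = L' := by omega
  obtain ⟨R, hRdef⟩ : ∃ R, R = (∑ j ∈ Finset.Ico (a + 1) (L' + 1), μ j) + 1 := ⟨_, rfl⟩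
  have hmucap : ∀ j ∈ Finset.Ico (a + 1) (L' + 1), μ j ≤ c := by
    intro j hj
    have h := hμa (Finset.mem_Ico.1 hj).1
    omega
  have hRlow : t + 1 ≤ R := by
    have h := Finset.card_nsmul_le_sum (Finset.Ico (a + 1) (L' + 1)) μ 1 (by
      intro j hj
      have := (hμlen j).2 (Finset.mem_Ico.1 hj).2
      omega)
    have h' : L' + 1 - (a + 1) ≤ ∑ j ∈ Finset.Ico (a + 1) (L' + 1), μ j := by
      simpa only [smul_eq_mul, mul_one, Nat.card_Ico] using h
    omega
  have hRhigh : R ≤ t * c := by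
    have hsp : ∑ j ∈ Finset.Ico (a + 1) (L' + 1), μ j
        = (∑ j ∈ Finset.Ico (a + 1) L', μ j) + μ L' :=
      Finset.sum_Ico_succ_top (by omega) μ
    have hcap : ∑ j ∈ Finset.Ico (a + 1) L', μ j ≤ (t - 1) * c := by
      calc ∑ j ∈ Finset.Ico (a + 1) L', μ j
          ≤ ∑ _j ∈ Finset.Ico (a + 1) L', c :=
            Finset.sum_le_sum (fun j hj => by
              have h := Finset.mem_Ico.1 hj
              exact hmucap j (Finset.mem_Ico.2 ⟨h.1, by omega⟩))
        _ = (L' - (a + 1)) * c := by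
            rw [Finset.sum_const, Nat.card_Ico, smul_eq_mul]
        _ = (t - 1) * c := by
            have he : L' - (a + 1) = t - 1 := by omega
            rw [he]
    have etc1 : (t - 1) * c + c = t * c := by
      obtain ⟨s, hs⟩ : ∃ s, t = s + 1 := ⟨t - 1, by omega⟩
      rw [hs, Nat.add_sub_cancel]; ring
    omega
  obtain ⟨q, hqdef⟩ : ∃ q, q = (R - t) / (c - 1) := ⟨_, rfl⟩
  obtain ⟨r, hrdef⟩ : ∃ r, r = (R - t) % (c - 1) := ⟨_, rfl⟩
  have hdm : (c - 1) * q + r = R - t := by rw [hqdef, hrdef]; exact Nat.div_add_mod (R - t) (c - 1)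
  have hrlt : r < c - 1 := by rw [hrdef]; exact Nat.mod_lt _ (by omega)
  have etc2 : t * (c - 1) + t = t * c := by
    obtain ⟨d, hd⟩ : ∃ d, c = d + 1 := ⟨c - 1, by omega⟩
    rw [hd, Nat.add_sub_cancel]; ring
  have hqt : q ≤ t := by
    have h1 : R - t ≤ t * (c - 1) := by omega
    rw [hqdef]
    calc (R - t) / (c - 1) ≤ t * (c - 1) / (c - 1) := Nat.div_le_div_right h1
      _ = t := Nat.mul_div_cancel t (by omega)
  have eqc : (c - 1) * q + q = q * c := by
    obtain ⟨d, hd⟩ : ∃ d, c = d + 1 := ⟨c - 1, by omega⟩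
    rw [hd, Nat.add_sub_cancel]; ring
  have hqr0 : q = t → r = 0 := by
    intro h; rw [h] at hdm
    have : (c - 1) * t + t = t * c := by rw [mul_comm (c - 1) t]; exact etc2
    omega
  clear hqdef hrdef
  -- the competitor partition ρ
  obtain ⟨ρ, hρdef⟩ : ∃ ρ : ℕ → ℕ, ρ = fun j => if j < a then μ j else if j ≤ a + q then c else
      if j < L' + 1 then (if j = a + q + 1 then 1 + r else 1) else 0 := ⟨_, rfl⟩
  have hvA : ∀ j, j < a → ρ j = μ j := by
    intro j h; simp only [hρdef]; split_ifs <;> omega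
  have hvB : ∀ j, a ≤ j → j ≤ a + q → ρ j = c := by
    intro j h1 h2; simp only [hρdef]; split_ifs <;> omega
  have hvC : a + q + 1 < L' + 1 → ρ (a + q + 1) = 1 + r := by
    intro h; simp only [hρdef]; split_ifs <;> omega
  have hvD : ∀ j, a + q + 1 < j → j < L' + 1 → ρ j = 1 := by
    intro j h1 h2; simp only [hρdef]; split_ifs <;> omega
  have hvE : ∀ j, L' + 1 ≤ j → ρ j = 0 := by
    intro j h; simp only [hρdef]; split_ifs <;> omega
  have hv_ge1 : ∀ j, a + q < j → j < L' + 1 → 1 ≤ ρ j := by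
    intro j h1 h2
    rcases eq_or_lt_of_le (show a + q + 1 ≤ j by omega) with h3 | h3
    · rw [← h3, hvC (by omega)]; omega
    · rw [hvD j h3 h2]
  have hρa : ρ a = c := hvB a le_rfl (by omega)
  -- antitone
  have hρanti : Antitone ρ := by
    apply antitone_nat_of_succ_le
    intro j
    rcases lt_or_ge (j + 1) a with h | h
    · rw [hvA _ h, hvA _ (by omega)]; exact hμa (by omega)
    rcases le_or_gt (j + 1) (a + q) with h2 | h2
    · rw [hvB _ h h2]
      rcases lt_or_ge j a with h3 | h3
      · rw [hvA _ h3]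
        have h4 : μ a ≤ μ j := hμa (by omega)
        omega
      · rw [hvB _ h3 (by omega)]
    rcases lt_or_ge (j + 1) (L' + 1) with h3 | h3
    · rcases le_or_gt j (a + q) with h4 | h4
      · rw [hvB j (by omega) h4]
        rcases eq_or_lt_of_le (show a + q + 1 ≤ j + 1 by omega) with h5 | h5
        · rw [← h5, hvC (by omega)]; omega
        · rw [hvD _ h5 h3]; omega
      · rw [hvD (j + 1) (by omega) h3]
        exact hv_ge1 j h4 (by omega)
    · rw [hvE _ h3]; omega
  -- length
  have hρlen : ∀ i, ρ i ≠ 0 ↔ i < L' + 1 := by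
    intro i
    constructor
    · intro h
      by_contra h2
      exact h (hvE i (by omega))
    · intro h
      rcases lt_or_ge i a with h1 | h1
      · rw [hvA _ h1]; exact (hμlen i).2 h
      rcases le_or_gt i (a + q) with h2 | h2
      · rw [hvB _ h1 h2]; omega
      · have := hv_ge1 i (by omega) h; omega
  -- sums
  have hmuzero : ∀ j, L' + 1 ≤ j → μ j = 0 := by
    intro j hj
    by_contra h
    have := (hμlen j).1 h
    omega
  have hdecomp : ∀ f : ℕ → ℕ, (∀ j, L' + 1 ≤ j → f j = 0) →
      ∑ i ∈ Finset.range m, f i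
        = (∑ i ∈ Finset.range a, f i) + f a + (∑ j ∈ Finset.Ico (a + 1) (L' + 1), f j) := by
    intro f hf
    have hz : ∑ j ∈ Finset.Ico (L' + 1) m, f j = 0 :=
      Finset.sum_eq_zero (fun j hj => hf j (Finset.mem_Ico.1 hj).1)
    rw [Finset.range_eq_Ico,
        ← Finset.sum_Ico_consecutive f (show (0:ℕ) ≤ L' + 1 by omega) (show L' + 1 ≤ m by omega),
        hz, add_zero,
        ← Finset.sum_Ico_consecutive f (show (0:ℕ) ≤ a by omega) (show a ≤ L' + 1 by omega),
        Finset.sum_eq_sum_Ico_succ_bot (show a < L' + 1 by omega) f,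
        ← Finset.range_eq_Ico, ← add_assoc]
  have hcblock : ∑ j ∈ Finset.Ico (a + 1) (a + q + 1), ρ j = q * c := by
    have hcst : ∀ j ∈ Finset.Ico (a + 1) (a + q + 1), ρ j = c := by
      intro j hj
      have h := Finset.mem_Ico.1 hj
      exact hvB j (by omega) (by omega)
    rw [Finset.sum_congr rfl hcst, Finset.sum_const, Nat.card_Ico, smul_eq_mul]
    congr 1; omega
  have htailρ : ∑ j ∈ Finset.Ico (a + 1) (L' + 1), ρ j = R := by
    rw [← Finset.sum_Ico_consecutive ρ (show a + 1 ≤ a + q + 1 by omega)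
          (show a + q + 1 ≤ L' + 1 by omega), hcblock]
    rcases eq_or_lt_of_le (show a + q + 1 ≤ L' + 1 by omega) with h | h
    · rw [h, Finset.Ico_self, Finset.sum_empty]
      have hq : q = t := by omega
      have hr : r = 0 := hqr0 hq
      omega
    · rw [Finset.sum_eq_sum_Ico_succ_bot h ρ, hvC h]
      have hone : ∀ j ∈ Finset.Ico (a + q + 1 + 1) (L' + 1), ρ j = 1 := by
        intro j hj
        have h2 := Finset.mem_Ico.1 hj
        exact hvD j (by omega) h2.2
      rw [Finset.sum_congr rfl hone, Finset.sum_const, Nat.card_Ico, smul_eq_mul, mul_one]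
      omega
  have hρsum : ∑ i ∈ Finset.range m, ρ i = ∑ i ∈ Finset.range m, μ i := by
    rw [hdecomp ρ hvE, hdecomp μ hmuzero, htailρ,
        Finset.sum_congr rfl (fun j hj => hvA j (Finset.mem_range.1 hj)), hρa, hμa']
    have he : (Finset.range a).sum μ = ∑ i ∈ Finset.range a, μ i := rfl
    omega
  -- not revlex-greater than μ, and distinct from μ
  have hρneμ : ρ ≠ μ := by
    intro h
    have := congrFun h a
    rw [hρa, hμa'] at this
    omega
  have hnotlt : ¬ RevlexLt ρ μ := by
    rintro ⟨i, hi, hpre⟩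
    rcases lt_trichotomy i a with h | h | h
    · rw [hvA i h] at hi; omega
    · rw [h, hρa, hμa'] at hi; omega
    · have := hpre a h
      rw [hρa, hμa'] at this
      omega
  refine ⟨ρ, hρanti, hρlen, hρsum, ?_, hρneμ, hnotlt⟩
  -- RevlexLt ρ η
  have hηL : η (L' + 1) ≠ 0 := (hηlen (L' + 1)).2 (by omega)
  have hex : ∃ j, ρ j ≠ η j := ⟨L' + 1, by rw [hvE (L' + 1) le_rfl]; intro h; exact hηL h.symm⟩
  set j0 := Nat.find hex with hj0def
  have hj0 : ρ j0 ≠ η j0 := Nat.find_spec hex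
  have hj0pre : ∀ j < j0, ρ j = η j := by
    intro j hj
    by_contra h
    exact Nat.find_min hex hj h
  have hj0L : j0 ≤ L' + 1 :=
    Nat.find_min' hex (by rw [hvE (L' + 1) le_rfl]; intro h; exact hηL h.symm)
  rcases hj0.lt_or_gt with hlt | hgt
  swap
  · exact ⟨j0, hgt, fun j hj => hj0pre j hj⟩
  · exfalso
    rcases lt_trichotomy j0 istar with h1 | h1 | h1
    · have h2 := hprefix j0 h1
      rw [hvA j0 (by omega)] at hlt
      omega
    · -- j0 = istar : but ρ istar ≥ c ≥ η istar
      have h2 : η istar ≤ c := by omega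
      have h3 : c ≤ ρ istar := by
        rcases lt_or_ge istar a with h | h
        · rw [hvA istar h]; omega
        · rw [hvB istar h (by omega)]
      rw [h1] at hlt
      omega
    · -- j0 > istar, so ρ istar = η istar
      have h2 : ρ istar = η istar := hj0pre istar h1
      rcases lt_or_ge istar a with h | h
      · rw [hvA istar h] at h2; omega
      have hηi : η istar = c := by
        rw [hvB istar h (by omega)] at h2
        omega
      rcases le_or_gt j0 (a + q) with h3 | h3
      · have h4 : ρ j0 = c := hvB j0 (by omega) h3
        have h5 : η j0 ≤ η istar := hηa (le_of_lt h1)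
        omega
      · -- sum argument
        have htail1 : ∑ j ∈ Finset.Ico (j0 + 1) m, ρ j = L' + 1 - (j0 + 1) := by
          rcases le_or_gt (j0 + 1) (L' + 1) with h4 | h4
          · rw [← Finset.sum_Ico_consecutive ρ h4 (show L' + 1 ≤ m by omega)]
            have hz : ∑ j ∈ Finset.Ico (L' + 1) m, ρ j = 0 :=
              Finset.sum_eq_zero (fun j hj => hvE j (Finset.mem_Ico.1 hj).1)
            have ho : ∀ j ∈ Finset.Ico (j0 + 1) (L' + 1), ρ j = 1 := by
              intro j hj
              have h5 := Finset.mem_Ico.1 hj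
              exact hvD j (by omega) h5.2
            rw [hz, add_zero, Finset.sum_congr rfl ho, Finset.sum_const,
                Nat.card_Ico, smul_eq_mul, mul_one]
          · have hz : ∑ j ∈ Finset.Ico (j0 + 1) m, ρ j = 0 :=
              Finset.sum_eq_zero (fun j hj => hvE j (by
                have := Finset.mem_Ico.1 hj; omega))
            rw [hz]; omega
        have htail2 : m - L' - 1 - j0 ≤ ∑ j ∈ Finset.Ico (j0 + 1) m, η j := by
          have hsub : Finset.Ico (j0 + 1) (m - (L' + 1) + 1) ⊆ Finset.Ico (j0 + 1) m :=
            Finset.Ico_subset_Ico le_rfl (by omega)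
          have h5 : ∀ j ∈ Finset.Ico (j0 + 1) (m - (L' + 1) + 1), 1 ≤ η j := by
            intro j hj
            have h6 := Finset.mem_Ico.1 hj
            have := (hηlen j).2 h6.2
            omega
          calc m - L' - 1 - j0 = (Finset.Ico (j0 + 1) (m - (L' + 1) + 1)).card • 1 := by
                rw [Nat.card_Ico, smul_eq_mul, mul_one]; omega
            _ ≤ ∑ j ∈ Finset.Ico (j0 + 1) (m - (L' + 1) + 1), η j :=
                Finset.card_nsmul_le_sum _ _ _ h5
            _ ≤ ∑ j ∈ Finset.Ico (j0 + 1) m, η j :=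
                Finset.sum_le_sum_of_subset hsub
        have hsplitρ : ∑ i ∈ Finset.range (j0 + 1), ρ i + ∑ j ∈ Finset.Ico (j0 + 1) m, ρ j
            = ∑ i ∈ Finset.range m, ρ i := Finset.sum_range_add_sum_Ico ρ (by omega)
        have hsplitη : ∑ i ∈ Finset.range (j0 + 1), η i + ∑ j ∈ Finset.Ico (j0 + 1) m, η j
            = ∑ i ∈ Finset.range m, η i := Finset.sum_range_add_sum_Ico η (by omega)
        have hheadρ : ∑ i ∈ Finset.range (j0 + 1), ρ i
            = ∑ i ∈ Finset.range j0, ρ i + ρ j0 := Finset.sum_range_succ ρ j0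
        have hheadη : ∑ i ∈ Finset.range (j0 + 1), η i
            = ∑ i ∈ Finset.range j0, η i + η j0 := Finset.sum_range_succ η j0
        have hpreeq : ∑ i ∈ Finset.range j0, ρ i = ∑ i ∈ Finset.range j0, η i :=
          Finset.sum_congr rfl (fun j hj => hj0pre j (Finset.mem_range.1 hj))
        have hηges : ∑ i ∈ Finset.range m, η i = ∑ i ∈ Finset.range m, ρ i := by
          rw [hηsum, hρsum]
        omega

/-- With `η` the revlex-least partition of `|μ|` of length `m - ℓ(μ) + 1` that is
`≥_revlex μ`, let `ν` be the revlex-greatest partition of `|μ|` with `ℓ(ν) = ℓ(μ)` and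
`ν ≤_revlex η`, and `i*` the least index with `η_{i*} < μ_{i*}`. Then `μ = ν` if and only
if `μ_{i*} - μ_{ℓ(μ)} ≤ 1`. -/
theorem mu_eq_nu_iff (m L : ℕ) (μ η ν : ℕ → ℕ)
    (hL2 : 2 ≤ L) (hLm : 2 * L ≤ m)
    (hμa : Antitone μ) (hμlen : ∀ i, μ i ≠ 0 ↔ i < L) (hμ1 : μ 0 ≤ m - 1)
    (hηa : Antitone η) (hηlen : ∀ i, η i ≠ 0 ↔ i < m - L + 1)
    (hηsum : ∑ i ∈ Finset.range m, η i = ∑ i ∈ Finset.range m, μ i)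
    (hηge : η = μ ∨ RevlexLt μ η)
    (hηmin : ∀ ρ : ℕ → ℕ, Antitone ρ → (∀ i, ρ i ≠ 0 ↔ i < m - L + 1) →
      ∑ i ∈ Finset.range m, ρ i = ∑ i ∈ Finset.range m, μ i →
      (ρ = μ ∨ RevlexLt μ ρ) → (η = ρ ∨ RevlexLt η ρ))
    (hνa : Antitone ν) (hνlen : ∀ i, ν i ≠ 0 ↔ i < L)
    (hνsum : ∑ i ∈ Finset.range m, ν i = ∑ i ∈ Finset.range m, μ i)
    (hνle : ν = η ∨ RevlexLt ν η)
    (hνmax : ∀ ρ : ℕ → ℕ, Antitone ρ → (∀ i, ρ i ≠ 0 ↔ i < L) →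
      ∑ i ∈ Finset.range m, ρ i = ∑ i ∈ Finset.range m, μ i →
      (ρ = η ∨ RevlexLt ρ η) → (ρ = ν ∨ RevlexLt ρ ν))
    (istar : ℕ) (histar : η istar < μ istar) (histar' : ∀ j < istar, ¬ η j < μ j) :
    (∀ i, μ i = ν i) ↔ μ istar ≤ μ (L - 1) + 1 := by
  have hiL : istar < L := by
    have h : μ istar ≠ 0 := by omega
    exact (hμlen istar).1 h
  have hprefix : ∀ j < istar, μ j = η j := by
    rcases hηge with h | ⟨i0, h1, h2⟩
    · exfalso; rw [h] at histar; omega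
    · intro j hj
      have hii : istar ≤ i0 := by
        by_contra h
        push_neg at h
        exact histar' i0 h h1
      exact h2 j (by omega)
  constructor
  · intro hμν
    by_contra hgap
    push_neg at hgap
    obtain ⟨ρ, h1, h2, h3, h4, h5, h6⟩ :=
      revlex_aux_exists_rho m L μ η hL2 hLm hμa hμlen hηa hηlen hηsum istar hiL hprefix
        histar (by omega)
    rcases hνmax ρ h1 h2 h3 (Or.inr h4) with h | ⟨i, hi, hpre⟩
    · exact h5 (by funext i; rw [h, ← hμν i])
    · exact h6 ⟨i, by rw [hμν i]; exact hi, fun j hj => by rw [hμν j]; exact hpre j hj⟩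
  · intro hgap
    have hμη : μ = η ∨ RevlexLt μ η := by
      rcases hηge with h | h
      · exact Or.inl h.symm
      · exact Or.inr h
    rcases hνmax μ hμa hμlen rfl hμη with h | ⟨k, hk, hpre⟩
    · intro i; rw [h]
    · exfalso
      have hνη : RevlexLt ν η := by
        rcases hνle with h | h
        · exfalso
          have h1 : ν L = 0 := by
            by_contra h2
            have := (hνlen L).1 h2
            omega
          have h2 : η L ≠ 0 := (hηlen L).2 (by omega)
          rw [h] at h1
          exact h2 h1
        · exact h
      obtain ⟨k', hk'η, hpre'⟩ := hνη
      have hk'i : istar ≤ k' := by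
        by_contra h
        push_neg at h
        rcases lt_or_ge k' k with h1 | h1
        · exact histar' k' h (by rw [hpre k' h1]; exact hk'η)
        · rcases lt_or_eq_of_le h1 with h2 | h2
          · have e1 := hpre' k h2
            have e2 := hprefix k (by omega)
            omega
          · rw [← h2] at hk'η
            exact histar' k (by omega) (by omega)
      have hki : istar ≤ k := by
        by_contra h
        push_neg at h
        have e1 : ν k = η k := hpre' k (by omega)
        have e2 := hprefix k h
        omega
      have hkL : k < L := (hμlen k).1 (by omega)
      have hle : ∀ j ∈ Finset.range m, ν j ≤ μ j := by
        intro j _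
        rcases lt_or_ge j k with h1 | h1
        · rw [hpre j h1]
        rcases lt_or_ge j L with h2 | h2
        · have e1 : ν j ≤ ν k := hνa h1
          have e2 : μ (L - 1) ≤ μ j := hμa (by omega)
          have e3 : μ k ≤ μ istar := hμa hki
          omega
        · have e1 : ν j = 0 := by
            by_contra hh
            have := (hνlen j).1 hh
            omega
          omega
      have hstrict : ∑ i ∈ Finset.range m, ν i < ∑ i ∈ Finset.range m, μ i :=
        Finset.sum_lt_sum hle ⟨k, Finset.mem_range.2 (by omega), hk⟩
      omega
end

section
/- Let m ≥ 1. For t, ℓ, s with 1 ≤ t ≤ m−1, 0 ≤ ℓ ≤ m/2, s ≥ 0, define g_{t,ℓ,s,m} as the number of monomials x_t^{f_t} x_{t+1}^{f_{t+1}} ··· x_{m−1}^{f_{m−1}} with f_t = s, total degree ∑_j f_j = ℓ, satisfying (i−1)f_i + i·f_{i+1} ≤ m − 2∑_{j=i}^{m−1} f_j for all 1 ≤ i ≤ m−2 (with f_i = 0 for i < t). Then g satisfies: g_{t,ℓ,s,m} = ∑_{j=0}^{ℓ−s} H(m − 2ℓ − t·j − (t−1)·s) · g_{t+1, ℓ−s,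 j, m} if m − 2ℓ ≥ (t−1)s, and g_{t,ℓ,s,m} = 0 otherwise, where H(n) = 1 if n ≥ 0 and 0 otherwise, with boundary condition g_{m,ℓ,s,m} = 1 if ℓ = s = 0 and 0 otherwise. -/
/-- Tuples `(f_t, …, f_{m-1})` of nonnegative integers (as functions `ℕ → ℕ` supported on
`[t, m-1]`) satisfying `(i-1)f_i + i·f_{i+1} ≤ m - 2∑_{j=i}^{m-1} f_j` for `1 ≤ i ≤ m-2`. -/
def OkTuple (m t : ℕ) (f : ℕ → ℕ) : Prop :=
  (∀ p, p < t → f p = 0) ∧ (∀ p, m ≤ p → f p = 0) ∧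
  ∀ i, 1 ≤ i → i ≤ m - 2 →
    (i - 1) * f i + i * f (i + 1) + 2 * ∑ j ∈ Finset.Ico i m, f j ≤ m

/-- `g_{t,ℓ,s,m}`: the number of such tuples with `f_t = s` and total sum `ℓ`. -/
noncomputable def gcount (t ℓ s m : ℕ) : ℕ :=
  Nat.card {f : ℕ → ℕ // OkTuple m t f ∧ f t = s ∧ ∑ j ∈ Finset.range m, f j = ℓ}

/-- The Heaviside function: `H(n) = 1` if `n ≥ 0`, else `0`. -/
def Heaviside (n : ℤ) : ℕ := if 0 ≤ n then 1 else 0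

/-- Sum over `Ico i m` equals sum over `range m` for functions vanishing below `i`. -/
lemma sum_Ico_eq_sum_range' {f : ℕ → ℕ} {i m : ℕ} (h : ∀ p, p < i → f p = 0) (him : i ≤ m) :
    ∑ j ∈ Finset.Ico i m, f j = ∑ j ∈ Finset.range m, f j := by
  rw [Finset.range_eq_Ico, ← Finset.sum_Ico_consecutive f (Nat.zero_le i) him]
  rw [Finset.sum_eq_zero (fun p hp => h p (Finset.mem_Ico.mp hp).2), zero_add]

/-- Each counted set is finite. -/
lemma gset_finite (t ℓ s m : ℕ) :
    Finite {f : ℕ → ℕ // OkTuple m t f ∧ f t = s ∧ ∑ j ∈ Finset.range m, f j = ℓ} := by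
  apply Finite.of_injective
    (fun x : {f : ℕ → ℕ // OkTuple m t f ∧ f t = s ∧ ∑ j ∈ Finset.range m, f j = ℓ} =>
      (fun i : Fin m => (⟨x.1 i, by
        have h1 : x.1 i ≤ ∑ j ∈ Finset.range m, x.1 j :=
          Finset.single_le_sum (fun _ _ => Nat.zero_le _) (Finset.mem_range.mpr i.2)
        have := x.2.2.2
        omega⟩ : Fin (ℓ + 1))))
  intro x y hxy
  ext p
  rcases lt_or_ge p m with hp | hp
  · have := congrArg (fun g => (g (⟨p, hp⟩ : Fin m)).1) hxy
    simpa using this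
  · rw [x.2.1.2.1 p hp, y.2.1.2.1 p hp]

instance (t ℓ s m : ℕ) :
    Finite {f : ℕ → ℕ // OkTuple m t f ∧ f t = s ∧ ∑ j ∈ Finset.range m, f j = ℓ} :=
  gset_finite t ℓ s m

instance fiber_finite (t ℓ s m j : ℕ) :
    Finite {f : ℕ → ℕ //
      (OkTuple m t f ∧ f t = s ∧ ∑ j ∈ Finset.range m, f j = ℓ) ∧ f (t + 1) = j} := by
  have := gset_finite t ℓ s m
  apply Finite.of_injective
    (fun x : {f : ℕ → ℕ //
        (OkTuple m t f ∧ f t = s ∧ ∑ j ∈ Finset.range m, f j = ℓ) ∧ f (t + 1) = j} =>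
      (⟨x.1, x.2.1⟩ : {f : ℕ → ℕ // OkTuple m t f ∧ f t = s ∧
        ∑ j ∈ Finset.range m, f j = ℓ}))
  intro x y h
  simp only [Subtype.mk.injEq] at h
  exact Subtype.ext h

lemma nat_card_sigma {n : ℕ} (β : Fin n → Type*) [∀ i, Finite (β i)] :
    Nat.card (Σ i, β i) = ∑ i, Nat.card (β i) := by
  have : ∀ i, Fintype (β i) := fun i => Fintype.ofFinite (β i)
  simp [Nat.card_eq_fintype_card, Fintype.card_sigma]

/-- Boundary condition. -/
lemma gcount_boundary (m ℓ' s' : ℕ) :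
    gcount m ℓ' s' m = if ℓ' = 0 ∧ s' = 0 then 1 else 0 := by
  have hzero : ∀ f : ℕ → ℕ, OkTuple m m f → f = 0 := by
    intro f hf
    funext p
    rcases lt_or_ge p m with hp | hp
    · exact hf.1 p hp
    · exact hf.2.1 p hp
  rw [gcount]
  split
  · rename_i h
    obtain ⟨h1, h2⟩ := h
    subst h1; subst h2
    rw [Nat.card_eq_one_iff_unique]
    constructor
    · constructor
      rintro ⟨f, hf⟩ ⟨g, hg⟩
      exact Subtype.ext ((hzero f hf.1).trans (hzero g hg.1).symm)
    · exact ⟨⟨0, ⟨⟨fun _ _ => rfl, fun _ _ => rfl, fun i _ _ => by simp⟩, rfl, by simp⟩⟩⟩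
  · rename_i h
    have : IsEmpty {f : ℕ → ℕ // OkTuple m m f ∧ f m = s' ∧
        ∑ j ∈ Finset.range m, f j = ℓ'} := by
      constructor
      rintro ⟨f, hf, hsx, hl⟩
      have hf0 := hzero f hf
      subst hf0
      simp at hsx hl
      exact h ⟨hl.symm, hsx.symm⟩
    exact Nat.card_of_isEmpty

/-- Any counted tuple forces `(t-1)s + 2ℓ ≤ m`. -/
lemma gcount_key_bound {m t ℓ s : ℕ} (ht1 : 1 ≤ t) (ht2 : t ≤ m - 1) (hℓ : 2 * ℓ ≤ m)
    {f : ℕ → ℕ} (hf : OkTuple m t f) (hft : f t = s)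
    (hsum : ∑ j ∈ Finset.range m, f j = ℓ) :
    (t - 1) * s + 2 * ℓ ≤ m := by
  have hm : 2 ≤ m := by omega
  rcases Nat.lt_or_ge t 2 with ht | ht
  · have : t = 1 := by omega
    subst this
    simpa using hℓ
  · have hc := hf.2.2 (t - 1) (by omega) (by omega)
    have h1 : f (t - 1) = 0 := hf.1 (t - 1) (by omega)
    have h2 : t - 1 + 1 = t := by omega
    have h3 : ∑ j ∈ Finset.Ico (t - 1) m, f j = ℓ := by
      rw [sum_Ico_eq_sum_range' (fun p hp => hf.1 p (by omega)) (by omega), hsum]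
    rw [h1, h2, h3, hft, mul_zero, zero_add] at hc
    exact hc

/-- Forward direction: peeling off position `t`. -/
lemma fwd_mem {m t ℓ s j : ℕ} (ht1 : 1 ≤ t) (htm : t + 1 ≤ m) (hs : s ≤ ℓ)
    {f : ℕ → ℕ} (hok : OkTuple m t f) (hft : f t = s)
    (hsum : ∑ p ∈ Finset.range m, f p = ℓ) (hfj : f (t + 1) = j) :
    OkTuple m (t + 1) (Function.update f t 0) ∧ Function.update f t 0 (t + 1) = j ∧
      ∑ p ∈ Finset.range m, Function.update f t 0 p = ℓ - s := by
  have hle : ∀ p, Function.update f t 0 p ≤ f p := by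
    intro p
    by_cases hp : p = t
    · subst hp; simp
    · rw [Function.update_of_ne hp]
  have hsum' : ∑ p ∈ Finset.range m, Function.update f t 0 p = ℓ - s := by
    rw [Finset.sum_update_of_mem (Finset.mem_range.mpr (by omega))]
    have := Finset.add_sum_erase (Finset.range m) f (Finset.mem_range.mpr (by omega : t < m))
    rw [Finset.sdiff_singleton_eq_erase]
    omega
  refine ⟨⟨?_, ?_, ?_⟩, ?_, hsum'⟩
  · intro p hp
    rcases Nat.lt_or_ge p t with h | h
    · rw [Function.update_of_ne (by omega)]; exact hok.1 p h
    · have : p = t := by omega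
      subst this; simp
  · intro p hp
    rw [Function.update_of_ne (by omega)]; exact hok.2.1 p hp
  · intro i hi1 hi2
    calc (i - 1) * Function.update f t 0 i + i * Function.update f t 0 (i + 1)
          + 2 * ∑ p ∈ Finset.Ico i m, Function.update f t 0 p
        ≤ (i - 1) * f i + i * f (i + 1) + 2 * ∑ p ∈ Finset.Ico i m, f p := by
          gcongr <;> [exact hle i; exact hle (i + 1); exact hle _]
      _ ≤ m := hok.2.2 i hi1 hi2
  · rw [Function.update_of_ne (by omega)]; exact hfj

/-- Backward direction: inserting `s` at position `t`. -/
lemma bwd_mem {m t ℓ s j : ℕ} (ht1 : 1 ≤ t) (htm : t + 1 ≤ m) (hℓ : 2 * ℓ ≤ m)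
    (hs : s ≤ ℓ) (hbig : (t - 1) * s + 2 * ℓ ≤ m)
    (hC : 2 * ℓ + t * j + (t - 1) * s ≤ m)
    {g : ℕ → ℕ} (hok : OkTuple m (t + 1) g) (hgt : g (t + 1) = j)
    (hsum : ∑ p ∈ Finset.range m, g p = ℓ - s) :
    OkTuple m t (Function.update g t s) ∧ Function.update g t s t = s ∧
      ∑ p ∈ Finset.range m, Function.update g t s p = ℓ := by
  have hgt0 : g t = 0 := hok.1 t (by omega)
  have hsum' : ∑ p ∈ Finset.range m, Function.update g t s p = ℓ := by
    rw [Finset.sum_update_of_mem (Finset.mem_range.mpr (by omega))]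
    rw [Finset.sdiff_singleton_eq_erase, Finset.sum_erase _ hgt0, hsum]
    omega
  have hvanish : ∀ p, p < t → Function.update g t s p = 0 := by
    intro p hp
    rw [Function.update_of_ne (by omega)]
    exact hok.1 p (by omega)
  refine ⟨⟨hvanish, ?_, ?_⟩, by simp, hsum'⟩
  · intro p hp
    rw [Function.update_of_ne (by omega)]; exact hok.2.1 p hp
  · intro i hi1 hi2
    rcases Nat.lt_or_ge i (t + 1) with hit | hit
    · -- i ≤ t : sum over Ico i m is ℓ
      have hsIco : ∑ p ∈ Finset.Ico i m, Function.update g t s p = ℓ := by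
        rw [sum_Ico_eq_sum_range' (fun p hp => hvanish p (by omega)) (by omega), hsum']
      rw [hsIco]
      rcases Nat.lt_trichotomy (i + 1) t with h | h | h
      · -- i + 1 < t
        rw [hvanish i (by omega), hvanish (i + 1) h]
        simp only [mul_zero, zero_add, add_zero]
        exact hℓ
      · -- i + 1 = t
        rw [hvanish i (by omega)]
        subst h
        rw [Function.update_self]
        simp only [mul_zero, zero_add]
        simpa using hbig
      · -- i = t
        have hit' : i = t := by omega
        subst hit'
        rw [Function.update_self, Function.update_of_ne (by omega), hgt]
        linarith
    · -- i ≥ t + 1 : same as g's constraint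
      have e1 : Function.update g t s i = g i := Function.update_of_ne (by omega) _ _
      have e2 : Function.update g t s (i + 1) = g (i + 1) :=
        Function.update_of_ne (by omega) _ _
      have e3 : ∑ p ∈ Finset.Ico i m, Function.update g t s p
          = ∑ p ∈ Finset.Ico i m, g p := by
        apply Finset.sum_congr rfl
        intro p hp
        have := (Finset.mem_Ico.mp hp).1
        exact Function.update_of_ne (by omega) _ _
      rw [e1, e2, e3]
      exact hok.2.2 i hi1 hi2

/-- The fiber count. -/
lemma card_fiber (m t ℓ s j : ℕ) (ht1 : 1 ≤ t) (htm : t + 1 ≤ m) (hℓ : 2 * ℓ ≤ m)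
    (hs : s ≤ ℓ) (hbig : (t - 1) * s + 2 * ℓ ≤ m) :
    Nat.card {f : ℕ → ℕ //
        (OkTuple m t f ∧ f t = s ∧ ∑ j ∈ Finset.range m, f j = ℓ) ∧ f (t + 1) = j}
      = Heaviside ((m : ℤ) - 2 * ℓ - t * j - ((t : ℤ) - 1) * s)
          * gcount (t + 1) (ℓ - s) j m := by
  by_cases hC : 2 * ℓ + t * j + (t - 1) * s ≤ m
  · -- Heaviside is 1
    have hH : Heaviside ((m : ℤ) - 2 * ℓ - t * j - ((t : ℤ) - 1) * s) = 1 := by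
      rw [Heaviside, if_pos]
      have : ((2 * ℓ + t * j + (t - 1) * s : ℕ) : ℤ) ≤ (m : ℤ) := by exact_mod_cast hC
      push_cast [Nat.cast_sub ht1] at this
      linarith
    rw [hH, one_mul, gcount]
    apply Nat.card_congr
    refine ⟨fun x => ⟨Function.update x.1 t 0, ?_⟩,
            fun y => ⟨Function.update y.1 t s, ?_⟩, ?_, ?_⟩
    · exact fwd_mem ht1 htm hs x.2.1.1 x.2.1.2.1 x.2.1.2.2 x.2.2
    · refine ⟨bwd_mem ht1 htm hℓ hs hbig hC y.2.1 y.2.2.1 y.2.2.2, ?_⟩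
      rw [Function.update_of_ne (by omega)]
      exact y.2.2.1
    · intro x
      apply Subtype.ext
      simp only
      rw [Function.update_idem, Function.update_eq_self_iff]
      exact x.2.1.2.1.symm
    · intro y
      apply Subtype.ext
      simp only
      rw [Function.update_idem, Function.update_eq_self_iff]
      exact (y.2.1.1 t (by omega)).symm
  · -- Heaviside is 0, and the fiber is empty
    have hH : Heaviside ((m : ℤ) - 2 * ℓ - t * j - ((t : ℤ) - 1) * s) = 0 := by
      rw [Heaviside, if_neg]
      intro habs
      apply hC
      have : ((2 * ℓ + t * j + (t - 1) * s : ℕ) : ℤ) ≤ (m : ℤ) := by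
        push_cast [Nat.cast_sub ht1]
        linarith
      exact_mod_cast this
    rw [hH, zero_mul]
    have : IsEmpty {f : ℕ → ℕ //
        (OkTuple m t f ∧ f t = s ∧ ∑ j ∈ Finset.range m, f j = ℓ) ∧ f (t + 1) = j} := by
      constructor
      rintro ⟨f, ⟨hok, hft, hsum⟩, hfj⟩
      rcases Nat.lt_or_ge (t + 1) m with htm' | htm'
      · have hc := hok.2.2 t (by omega) (by omega)
        have h3 : ∑ p ∈ Finset.Ico t m, f p = ℓ := by
          rw [sum_Ico_eq_sum_range' hok.1 (by omega), hsum]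
        rw [h3, hft, hfj] at hc
        omega
      · have hz : f (t + 1) = 0 := hok.2.1 (t + 1) htm'
        rw [hz] at hfj
        subst hfj
        omega
    exact Nat.card_of_isEmpty

/-- Splitting the count by the value of `f (t+1)`. -/
lemma gcount_split (m t ℓ s : ℕ) (htm : t < m) (hs : s ≤ ℓ) :
    gcount t ℓ s m = ∑ j ∈ Finset.range (ℓ - s + 1),
      Nat.card {f : ℕ → ℕ //
        (OkTuple m t f ∧ f t = s ∧ ∑ j ∈ Finset.range m, f j = ℓ) ∧ f (t + 1) = j} := by
  rw [gcount, ← Fin.sum_univ_eq_sum_range, ← nat_card_sigma]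
  apply Nat.card_congr
  have hbound : ∀ f : ℕ → ℕ, (OkTuple m t f ∧ f t = s ∧ ∑ j ∈ Finset.range m, f j = ℓ) →
      f (t + 1) < ℓ - s + 1 := by
    rintro f ⟨hok, hft, hsum⟩
    rcases Nat.lt_or_ge (t + 1) m with h | h
    · have hsub : ({t, t + 1} : Finset ℕ) ⊆ Finset.range m := by
        intro p hp
        simp only [Finset.mem_insert, Finset.mem_singleton] at hp
        rcases hp with hp | hp <;> subst hp <;> exact Finset.mem_range.mpr (by omega)
      have hle := Finset.sum_le_sum_of_subset hsub (f := f)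
      rw [Finset.sum_pair (by omega : t ≠ t + 1), hft, hsum] at hle
      omega
    · rw [hok.2.1 (t + 1) h]
      omega
  refine ⟨fun x => ⟨⟨x.1 (t + 1), hbound x.1 x.2⟩, ⟨x.1, x.2, rfl⟩⟩,
          fun y => ⟨y.2.1, y.2.2.1⟩, fun x => rfl, ?_⟩
  rintro ⟨⟨jv, hjv⟩, f, hf, hj⟩
  simp only at hj
  subst hj
  rfl

/-- The recursion in `t` for `g_{t,ℓ,s,m}`: for `1 ≤ t ≤ m-1`, `0 ≤ ℓ ≤ m/2`, `s ≤ ℓ`,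
`g_{t,ℓ,s,m} = ∑_{j=0}^{ℓ-s} H(m - 2ℓ - t·j - (t-1)·s) · g_{t+1,ℓ-s,j,m}` when
`m - 2ℓ ≥ (t-1)s`, and `g_{t,ℓ,s,m} = 0` otherwise; boundary condition
`g_{m,ℓ,s,m} = 1` if `ℓ = s = 0` and `0` otherwise. -/
theorem gcount_recursion (m t ℓ s : ℕ) (ht1 : 1 ≤ t) (ht2 : t ≤ m - 1)
    (hℓ : 2 * ℓ ≤ m) (hs : s ≤ ℓ) :
    ((t - 1) * s + 2 * ℓ ≤ m →
      gcount t ℓ s m =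
        ∑ j ∈ Finset.range (ℓ - s + 1),
          Heaviside ((m : ℤ) - 2 * ℓ - t * j - ((t : ℤ) - 1) * s) *
            gcount (t + 1) (ℓ - s) j m) ∧
    (m < (t - 1) * s + 2 * ℓ → gcount t ℓ s m = 0) ∧
    (∀ ℓ' s' : ℕ, gcount m ℓ' s' m = if ℓ' = 0 ∧ s' = 0 then 1 else 0) := by
  have hm : 2 ≤ m := by omega
  refine ⟨?_, ?_, fun ℓ' s' => gcount_boundary m ℓ' s'⟩
  · intro hbig
    rw [gcount_split m t ℓ s (by omega) hs]
    exact Finset.sum_congr rfl fun j _ =>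
      card_fiber m t ℓ s j ht1 (by omega) hℓ hs hbig
  · intro hlt
    have : IsEmpty {f : ℕ → ℕ // OkTuple m t f ∧ f t = s ∧
        ∑ j ∈ Finset.range m, f j = ℓ} := by
      constructor
      rintro ⟨f, hok, hft, hsum⟩
      exact absurd (gcount_key_bound ht1 ht2 hℓ hok hft hsum) (by omega)
    rw [gcount]
    exact Nat.card_of_isEmpty
end
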